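/- Let X0 = x2 ∂/∂x1 - x1 ∂/∂x2 + x5 ∂/∂x4 - x4 ∂/∂x5 + P ∂/∂x6 + Q ∂/∂x7 + R ∂/∂x8 with P = -x1⁴/24 + x1²x2²/8 + x7, Q = x1x2³/12 + x1³x2/12 - 2x6 + 2x8, R = x1²x2²/8 - x2⁴/24 - x7. Then with X1,...,X8 the symmetric model fields, one has [X0,X1]=X2, [X0,X2]=-X1, [X0,X3]=0, [X0,X4]=X5, [X0,X5]=-X4, [X0,X6]=2X7, [X0,X7]=X8-X6, [X0,X8]=-2X7. -/

import Mathlib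

/- The rotation field X0 is an infinitesimal symmetry of the symmetric model
of the (2,3,5,8) sub-Riemannian structure. -/

noncomputable section

abbrev Pt : Type := Fin 8 → ℝ
abbrev VF : Type := Pt → Pt

noncomputable def pd (f : Pt → ℝ) (x : Pt) (j : Fin 8) : ℝ :=
  fderiv ℝ f x (Pi.single j 1)


lemma pd_coord (x : Pt) (i j : Fin 8) : pd (fun y => y i) x j = if j = i then 1 else 0 := by
  rw [pd, (hasFDerivAt_apply i x).fderiv]
  simp [Pi.single_apply, eq_comm]

lemma pd_const (x : Pt) (j : Fin 8) (c : ℝ) : pd (fun _ => c) x j = 0 := by simp [pd]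

lemma pd_add (f g : Pt → ℝ) (x : Pt) (j : Fin 8) (hf : DifferentiableAt ℝ f x)
    (hg : DifferentiableAt ℝ g x) :
    pd (fun y => f y + g y) x j = pd f x j + pd g x j := by
  simp [pd, fderiv_fun_add hf hg]

lemma pd_sub (f g : Pt → ℝ) (x : Pt) (j : Fin 8) (hf : DifferentiableAt ℝ f x)
    (hg : DifferentiableAt ℝ g x) :
    pd (fun y => f y - g y) x j = pd f x j - pd g x j := by
  simp [pd, fderiv_fun_sub hf hg]

lemma pd_neg (f : Pt → ℝ) (x : Pt) (j : Fin 8) :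
    pd (fun y => -f y) x j = -pd f x j := by
  simp [pd, fderiv_neg]

lemma pd_mul (f g : Pt → ℝ) (x : Pt) (j : Fin 8) (hf : DifferentiableAt ℝ f x)
    (hg : DifferentiableAt ℝ g x) :
    pd (fun y => f y * g y) x j = f x * pd g x j + g x * pd f x j := by
  rw [pd, fderiv_fun_mul hf hg]; simp [pd]

lemma pd_div_const (f : Pt → ℝ) (x : Pt) (j : Fin 8) (c : ℝ)
    (hf : DifferentiableAt ℝ f x) :
    pd (fun y => f y / c) x j = pd f x j / c := by
  simp only [div_eq_mul_inv, pd, fderiv_mul_const hf]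
  simp [mul_comm]

lemma pd_pow (f : Pt → ℝ) (x : Pt) (j : Fin 8) (n : ℕ) (hf : DifferentiableAt ℝ f x) :
    pd (fun y => f y ^ n) x j = n * f x ^ (n - 1) * pd f x j := by
  induction n with
  | zero => simpa using pd_const x j 1
  | succ n ih =>
    have : (fun y => f y ^ (n+1)) = fun y => f y ^ n * f y := by
      funext y; ring
    rw [this, pd_mul (fun y => f y ^ n) f _ _ (hf.pow n) hf, ih]
    cases n with
    | zero => simp
    | succ m =>
      simp only [Nat.add_sub_cancel]
      push_cast
      rw [pow_succ]
      ring

lemma vec8_0 (a0 a1 a2 a3 a4 a5 a6 a7 : ℝ) : ![a0,a1,a2,a3,a4,a5,a6,a7] (0:Fin 8) = a0 := rfl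
lemma vec8_1 (a0 a1 a2 a3 a4 a5 a6 a7 : ℝ) : ![a0,a1,a2,a3,a4,a5,a6,a7] (1:Fin 8) = a1 := rfl
lemma vec8_2 (a0 a1 a2 a3 a4 a5 a6 a7 : ℝ) : ![a0,a1,a2,a3,a4,a5,a6,a7] (2:Fin 8) = a2 := rfl
lemma vec8_3 (a0 a1 a2 a3 a4 a5 a6 a7 : ℝ) : ![a0,a1,a2,a3,a4,a5,a6,a7] (3:Fin 8) = a3 := rfl
lemma vec8_4 (a0 a1 a2 a3 a4 a5 a6 a7 : ℝ) : ![a0,a1,a2,a3,a4,a5,a6,a7] (4:Fin 8) = a4 := rfl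
lemma vec8_5 (a0 a1 a2 a3 a4 a5 a6 a7 : ℝ) : ![a0,a1,a2,a3,a4,a5,a6,a7] (5:Fin 8) = a5 := rfl
lemma vec8_6 (a0 a1 a2 a3 a4 a5 a6 a7 : ℝ) : ![a0,a1,a2,a3,a4,a5,a6,a7] (6:Fin 8) = a6 := rfl
lemma vec8_7 (a0 a1 a2 a3 a4 a5 a6 a7 : ℝ) : ![a0,a1,a2,a3,a4,a5,a6,a7] (7:Fin 8) = a7 := rfl

lemma vec8_mk_0 (a0 a1 a2 a3 a4 a5 a6 a7 : ℝ) (h : 0 < 8) : ![a0,a1,a2,a3,a4,a5,a6,a7] ⟨0, h⟩ = a0 := rfl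
lemma vec8_mk_1 (a0 a1 a2 a3 a4 a5 a6 a7 : ℝ) (h : 1 < 8) : ![a0,a1,a2,a3,a4,a5,a6,a7] ⟨1, h⟩ = a1 := rfl
lemma vec8_mk_2 (a0 a1 a2 a3 a4 a5 a6 a7 : ℝ) (h : 2 < 8) : ![a0,a1,a2,a3,a4,a5,a6,a7] ⟨2, h⟩ = a2 := rfl
lemma vec8_mk_3 (a0 a1 a2 a3 a4 a5 a6 a7 : ℝ) (h : 3 < 8) : ![a0,a1,a2,a3,a4,a5,a6,a7] ⟨3, h⟩ = a3 := rfl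
lemma vec8_mk_4 (a0 a1 a2 a3 a4 a5 a6 a7 : ℝ) (h : 4 < 8) : ![a0,a1,a2,a3,a4,a5,a6,a7] ⟨4, h⟩ = a4 := rfl
lemma vec8_mk_5 (a0 a1 a2 a3 a4 a5 a6 a7 : ℝ) (h : 5 < 8) : ![a0,a1,a2,a3,a4,a5,a6,a7] ⟨5, h⟩ = a5 := rfl
lemma vec8_mk_6 (a0 a1 a2 a3 a4 a5 a6 a7 : ℝ) (h : 6 < 8) : ![a0,a1,a2,a3,a4,a5,a6,a7] ⟨6, h⟩ = a6 := rfl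
lemma vec8_mk_7 (a0 a1 a2 a3 a4 a5 a6 a7 : ℝ) (h : 7 < 8) : ![a0,a1,a2,a3,a4,a5,a6,a7] ⟨7, h⟩ = a7 := rfl

noncomputable def bracket (X Y : VF) : VF := fun x i =>
  ∑ j, (X x j * pd (fun y => Y y i) x j - Y x j * pd (fun y => X y i) x j)

noncomputable def X1 : VF := fun x =>
  ![1, 0, -(x 1)/2, 0, -((x 0)^2 + (x 1)^2)/2, 0, -(x 0)*(x 1)^2/4, -(x 1)^3/6]
noncomputable def X2 : VF := fun x =>
  ![0, 1, (x 0)/2, ((x 0)^2 + (x 1)^2)/2, 0, (x 0)^3/6, (x 0)^2*(x 1)/4, 0]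
noncomputable def X3 : VF := fun x =>
  ![0, 0, 1, x 0, x 1, (x 0)^2/2, (x 0)*(x 1), (x 1)^2/2]
noncomputable def X4 : VF := fun x => ![0, 0, 0, 1, 0, x 0, x 1, 0]
noncomputable def X5 : VF := fun x => ![0, 0, 0, 0, 1, 0, x 0, x 1]
noncomputable def X6 : VF := fun _ => ![0, 0, 0, 0, 0, 1, 0, 0]
noncomputable def X7 : VF := fun _ => ![0, 0, 0, 0, 0, 0, 1, 0]
noncomputable def X8 : VF := fun _ => ![0, 0, 0, 0, 0, 0, 0, 1]

noncomputable def P (x : Pt) : ℝ := -(x 0)^4/24 + (x 0)^2*(x 1)^2/8 + x 6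
noncomputable def Q (x : Pt) : ℝ := (x 0)*(x 1)^3/12 + (x 0)^3*(x 1)/12 - 2*(x 5) + 2*(x 7)
noncomputable def R (x : Pt) : ℝ := (x 0)^2*(x 1)^2/8 - (x 1)^4/24 - x 6

/-- X0 = x2 ∂₁ - x1 ∂₂ + x5 ∂₄ - x4 ∂₅ + P ∂₆ + Q ∂₇ + R ∂₈. -/
noncomputable def X0 : VF := fun x =>
  ![x 1, -(x 0), 0, x 4, -(x 3), P x, Q x, R x]

set_option maxHeartbeats 4000000 in
lemma br1 : bracket X0 X1 = X2 := by
  funext x i ; fin_cases i <;>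
    simp (disch := fun_prop) only [bracket, X0, X1, X2, X3, X4, X5, X6, X7, X8, P, Q, R,
      Fin.sum_univ_eight, vec8_0, vec8_1, vec8_2, vec8_3, vec8_4, vec8_5, vec8_6, vec8_7,
      vec8_mk_0, vec8_mk_1, vec8_mk_2, vec8_mk_3, vec8_mk_4, vec8_mk_5, vec8_mk_6, vec8_mk_7,
      pd_add, pd_sub, pd_neg, pd_mul, pd_div_const, pd_pow, pd_coord,
      pd_const] <;> (try simp) <;> (try ring)

set_option maxHeartbeats 4000000 in
lemma br2 : bracket X0 X2 = (fun x i => -(X1 x i)) := by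
  funext x i ; fin_cases i <;>
    simp (disch := fun_prop) only [bracket, X0, X1, X2, X3, X4, X5, X6, X7, X8, P, Q, R,
      Fin.sum_univ_eight, vec8_0, vec8_1, vec8_2, vec8_3, vec8_4, vec8_5, vec8_6, vec8_7,
      vec8_mk_0, vec8_mk_1, vec8_mk_2, vec8_mk_3, vec8_mk_4, vec8_mk_5, vec8_mk_6, vec8_mk_7,
      pd_add, pd_sub, pd_neg, pd_mul, pd_div_const, pd_pow, pd_coord,
      pd_const] <;> (try simp) <;> (try ring)

set_option maxHeartbeats 4000000 in
lemma br3 : bracket X0 X3 = (fun _ _ => (0:ℝ)) := by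
  funext x i ; fin_cases i <;>
    simp (disch := fun_prop) only [bracket, X0, X1, X2, X3, X4, X5, X6, X7, X8, P, Q, R,
      Fin.sum_univ_eight, vec8_0, vec8_1, vec8_2, vec8_3, vec8_4, vec8_5, vec8_6, vec8_7,
      vec8_mk_0, vec8_mk_1, vec8_mk_2, vec8_mk_3, vec8_mk_4, vec8_mk_5, vec8_mk_6, vec8_mk_7,
      pd_add, pd_sub, pd_neg, pd_mul, pd_div_const, pd_pow, pd_coord,
      pd_const] <;> (try simp) <;> (try ring)

set_option maxHeartbeats 4000000 in
lemma br4 : bracket X0 X4 = X5 := by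
  funext x i ; fin_cases i <;>
    simp (disch := fun_prop) only [bracket, X0, X1, X2, X3, X4, X5, X6, X7, X8, P, Q, R,
      Fin.sum_univ_eight, vec8_0, vec8_1, vec8_2, vec8_3, vec8_4, vec8_5, vec8_6, vec8_7,
      vec8_mk_0, vec8_mk_1, vec8_mk_2, vec8_mk_3, vec8_mk_4, vec8_mk_5, vec8_mk_6, vec8_mk_7,
      pd_add, pd_sub, pd_neg, pd_mul, pd_div_const, pd_pow, pd_coord,
      pd_const] <;> (try simp) <;> (try ring)

set_option maxHeartbeats 4000000 in
lemma br5 : bracket X0 X5 = (fun x i => -(X4 x i)) := by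
  funext x i ; fin_cases i <;>
    simp (disch := fun_prop) only [bracket, X0, X1, X2, X3, X4, X5, X6, X7, X8, P, Q, R,
      Fin.sum_univ_eight, vec8_0, vec8_1, vec8_2, vec8_3, vec8_4, vec8_5, vec8_6, vec8_7,
      vec8_mk_0, vec8_mk_1, vec8_mk_2, vec8_mk_3, vec8_mk_4, vec8_mk_5, vec8_mk_6, vec8_mk_7,
      pd_add, pd_sub, pd_neg, pd_mul, pd_div_const, pd_pow, pd_coord,
      pd_const] <;> (try simp) <;> (try ring)

set_option maxHeartbeats 4000000 in
lemma br6 : bracket X0 X6 = (fun x i => 2 * X7 x i) := by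
  funext x i ; fin_cases i <;>
    simp (disch := fun_prop) only [bracket, X0, X1, X2, X3, X4, X5, X6, X7, X8, P, Q, R,
      Fin.sum_univ_eight, vec8_0, vec8_1, vec8_2, vec8_3, vec8_4, vec8_5, vec8_6, vec8_7,
      vec8_mk_0, vec8_mk_1, vec8_mk_2, vec8_mk_3, vec8_mk_4, vec8_mk_5, vec8_mk_6, vec8_mk_7,
      pd_add, pd_sub, pd_neg, pd_mul, pd_div_const, pd_pow, pd_coord,
      pd_const] <;> (try simp) <;> (try ring)

set_option maxHeartbeats 4000000 in
lemma br7 : bracket X0 X7 = (fun x i => X8 x i - X6 x i) := by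
  funext x i ; fin_cases i <;>
    simp (disch := fun_prop) only [bracket, X0, X1, X2, X3, X4, X5, X6, X7, X8, P, Q, R,
      Fin.sum_univ_eight, vec8_0, vec8_1, vec8_2, vec8_3, vec8_4, vec8_5, vec8_6, vec8_7,
      vec8_mk_0, vec8_mk_1, vec8_mk_2, vec8_mk_3, vec8_mk_4, vec8_mk_5, vec8_mk_6, vec8_mk_7,
      pd_add, pd_sub, pd_neg, pd_mul, pd_div_const, pd_pow, pd_coord,
      pd_const] <;> (try simp) <;> (try ring)

set_option maxHeartbeats 4000000 in
lemma br8 : bracket X0 X8 = (fun x i => -(2 * X7 x i)) := by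
  funext x i ; fin_cases i <;>
    simp (disch := fun_prop) only [bracket, X0, X1, X2, X3, X4, X5, X6, X7, X8, P, Q, R,
      Fin.sum_univ_eight, vec8_0, vec8_1, vec8_2, vec8_3, vec8_4, vec8_5, vec8_6, vec8_7,
      vec8_mk_0, vec8_mk_1, vec8_mk_2, vec8_mk_3, vec8_mk_4, vec8_mk_5, vec8_mk_6, vec8_mk_7,
      pd_add, pd_sub, pd_neg, pd_mul, pd_div_const, pd_pow, pd_coord,
      pd_const] <;> (try simp) <;> (try ring)

theorem X0_infinitesimal_symmetry :
    bracket X0 X1 = X2 ∧ bracket X0 X2 = (fun x i => -(X1 x i)) ∧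
    bracket X0 X3 = (fun _ _ => 0) ∧
    bracket X0 X4 = X5 ∧ bracket X0 X5 = (fun x i => -(X4 x i)) ∧
    bracket X0 X6 = (fun x i => 2 * X7 x i) ∧
    bracket X0 X7 = (fun x i => X8 x i - X6 x i) ∧
    bracket X0 X8 = (fun x i => -(2 * X7 x i)) :=
  ⟨br1, br2, br3, br4, br5, br6, br7, br8⟩

end
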